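/- Let G be a group and a, b ∈ G. Define a sequence s : ℕ → G by s(0) = a, s(1) = b, and s(n+2) = s(n+1)·s(n)⁻¹·s(n+1). Then for all j, k ∈ ℕ, s(j+k) = s(j)·a⁻¹·s(k). -/
import Mathlib

/-- Davis iteration: s(0) = a, s(1) = b, s(n+2) = s(n+1)·s(n)⁻¹·s(n+1) implies
s(j+k) = s(j)·a⁻¹·s(k) for all j, k ∈ ℕ. -/
theorem stmt4 {G : Type*} [Group G] (a b : G) (s : ℕ → G)
    (h0 : s 0 = a) (h1 : s 1 = b)
    (hrec : ∀ n : ℕ, s (n + 2) = s (n + 1) * (s n)⁻¹ * s (n + 1)) :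
    ∀ j k : ℕ, s (j + k) = s j * a⁻¹ * s k := by
  have step : ∀ n : ℕ, s (n + 1) = s n * a⁻¹ * b := by
    intro n
    induction n with
    | zero => simp [h0, h1]
    | succ m ih =>
      rw [hrec m, ih]
      group
  intro j k
  induction k with
  | zero => simp [h0]
  | succ m ih =>
    rw [show j + (m + 1) = (j + m) + 1 from rfl, step, ih, step]
    group
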